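/- Let λ₃ > 0, D ∈ R^{p×d}, y ∈ R^p, M ∈ R^{p×d}, and set u := (‖y‖₂² + 1/λ₃)⁻¹ (D − M)ᵀ y and M' := M + y uᵀ. Then (λ₃/2)·‖D − M'‖_F² = (λ₃/2)·‖D − M‖_F² − (λ₃/2)·‖y‖₂²·‖u‖₂² − ‖u‖₂². Consequently, for any t ≥ 1 and any nonnegative reals s₁, …, s_t (interpreted as s_i = (1/2)·‖u_i‖₂² for earlier iterates), writing s_{t+1} = (1/2)·‖u‖₂², the quantity (1/(t+1))·Σ_{i=1}^{t+1} s_i + (λ₃/(2(t+1)))·‖D − M'‖_F² − (1/t)·Σ_{i=1}^{t} s_i − (λ₃/(2t))·‖D − M‖_F² is at most −(1/(t+1))·((λ₃/2)·‖y‖₂²·‖u‖₂² + (1/2)·‖u‖₂²), and in particular is nonpositive. -/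

import Mathlib

open Matrix

set_option maxHeartbeats 1000000 in
/-- With `u = (‖y‖₂² + 1/λ₃)⁻¹ (D − M)ᵀ y` and `M' = M + y uᵀ`, we have
`(λ₃/2)‖D − M'‖_F² = (λ₃/2)‖D − M‖_F² − (λ₃/2)‖y‖₂²‖u‖₂² − ‖u‖₂²`; consequently for
any `t ≥ 1` and nonnegative `s₁, …, s_t`, writing `s_{t+1} = (1/2)‖u‖₂²`,
`(1/(t+1)) Σᵢ₌₁^{t+1} sᵢ + (λ₃/(2(t+1)))‖D − M'‖² − (1/t) Σᵢ₌₁^t sᵢ − (λ₃/(2t))‖D − M‖²`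
is at most `−(1/(t+1))((λ₃/2)‖y‖²‖u‖² + (1/2)‖u‖²)` and in particular nonpositive. -/
theorem stmt_17 (p d : ℕ) (l3 : ℝ) (hl3 : 0 < l3)
    (D M : Matrix (Fin p) (Fin d) ℝ) (y : Fin p → ℝ)
    (u : Fin d → ℝ) (hu : u = (∑ i, (y i) ^ 2 + 1 / l3)⁻¹ • ((D - M)ᵀ *ᵥ y))
    (M' : Matrix (Fin p) (Fin d) ℝ) (hM' : M' = M + vecMulVec y u) :
    ((l3 / 2) * (∑ i, ∑ j, ((D - M') i j) ^ 2) =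
        (l3 / 2) * (∑ i, ∑ j, ((D - M) i j) ^ 2) -
        (l3 / 2) * ((∑ i, (y i) ^ 2) * ∑ j, (u j) ^ 2) - ∑ j, (u j) ^ 2) ∧
    ∀ t : ℕ, 1 ≤ t → ∀ s : Fin t → ℝ, (∀ i, 0 ≤ s i) →
      ((1 / ((t : ℝ) + 1)) * (∑ i, s i + (1 / 2) * ∑ j, (u j) ^ 2)
          + (l3 / (2 * ((t : ℝ) + 1))) * (∑ i, ∑ j, ((D - M') i j) ^ 2)
          - (1 / (t : ℝ)) * ∑ i, s i
          - (l3 / (2 * (t : ℝ))) * (∑ i, ∑ j, ((D - M) i j) ^ 2) ≤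
        -(1 / ((t : ℝ) + 1)) *
          ((l3 / 2) * ((∑ i, (y i) ^ 2) * ∑ j, (u j) ^ 2) + (1 / 2) * ∑ j, (u j) ^ 2)) ∧
      ((1 / ((t : ℝ) + 1)) * (∑ i, s i + (1 / 2) * ∑ j, (u j) ^ 2)
          + (l3 / (2 * ((t : ℝ) + 1))) * (∑ i, ∑ j, ((D - M') i j) ^ 2)
          - (1 / (t : ℝ)) * ∑ i, s i
          - (l3 / (2 * (t : ℝ))) * (∑ i, ∑ j, ((D - M) i j) ^ 2) ≤ 0) := by
  set c : ℝ := ∑ i, (y i) ^ 2 + 1 / l3 with hc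
  have hyn : (0:ℝ) ≤ ∑ i, (y i) ^ 2 := Finset.sum_nonneg fun i _ => sq_nonneg _
  have hcpos : 0 < c := by positivity
  have hcne : c ≠ 0 := ne_of_gt hcpos
  have hEy : ∀ j, ∑ i, (D - M) i j * y i = c * u j := by
    intro j
    have : u j = c⁻¹ * ∑ i, (D - M) i j * y i := by
      rw [hu]; simp [mulVec, dotProduct, transpose_apply, mul_comm]
    rw [this]; field_simp
  have cross : ∑ i, ∑ j, (D - M) i j * y i * u j = c * ∑ j, (u j) ^ 2 := by
    rw [Finset.sum_comm]
    calc ∑ j, ∑ i, (D - M) i j * y i * u j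
        = ∑ j, (∑ i, (D - M) i j * y i) * u j := by
          exact Finset.sum_congr rfl fun j _ => (Finset.sum_mul _ _ _).symm
      _ = ∑ j, c * u j * u j := Finset.sum_congr rfl fun j _ => by rw [hEy j]
      _ = c * ∑ j, (u j) ^ 2 := by
          rw [Finset.mul_sum]
          exact Finset.sum_congr rfl fun j _ => by ring
  have sqeq : ∑ i, ∑ j, (y i) ^ 2 * (u j) ^ 2 =
      (∑ i, (y i) ^ 2) * ∑ j, (u j) ^ 2 := (Finset.sum_mul_sum _ _ _ _).symm
  have key : ∑ i, ∑ j, ((D - M') i j) ^ 2 =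
      ∑ i, ∑ j, ((D - M) i j) ^ 2 - 2 * c * ∑ j, (u j) ^ 2 +
        (∑ i, (y i) ^ 2) * ∑ j, (u j) ^ 2 := by
    have h1 : ∀ i j, ((D - M') i j) ^ 2 =
        ((D - M) i j) ^ 2 - 2 * ((D - M) i j * y i * u j) + (y i)^2 * (u j)^2 := by
      intro i j
      simp only [hM', vecMulVec_apply, Matrix.sub_apply, Matrix.add_apply, Pi.smul_apply]
      ring
    calc ∑ i, ∑ j, ((D - M') i j) ^ 2
        = ∑ i, ∑ j, (((D - M) i j) ^ 2 - 2 * ((D - M) i j * y i * u j)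
            + (y i)^2 * (u j)^2) := by
          exact Finset.sum_congr rfl fun i _ => Finset.sum_congr rfl fun j _ => h1 i j
      _ = ∑ i, ∑ j, ((D - M) i j) ^ 2
            - 2 * ∑ i, ∑ j, (D - M) i j * y i * u j
            + ∑ i, ∑ j, (y i)^2 * (u j)^2 := by
          simp only [Finset.sum_add_distrib, Finset.sum_sub_distrib, ← Finset.mul_sum]
      _ = _ := by rw [cross, sqeq]; ring
  have first : (l3 / 2) * (∑ i, ∑ j, ((D - M') i j) ^ 2) =
      (l3 / 2) * (∑ i, ∑ j, ((D - M) i j) ^ 2) -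
      (l3 / 2) * ((∑ i, (y i) ^ 2) * ∑ j, (u j) ^ 2) - ∑ j, (u j) ^ 2 := by
    rw [key, hc]
    field_simp
    ring
  refine ⟨first, ?_⟩
  intro t ht s hs
  have htp : (0:ℝ) < t := by exact_mod_cast Nat.lt_of_lt_of_le Nat.zero_lt_one ht
  have hS : (0:ℝ) ≤ ∑ i, s i := Finset.sum_nonneg fun i _ => hs i
  have hA : (0:ℝ) ≤ ∑ i, ∑ j, ((D - M) i j) ^ 2 :=
    Finset.sum_nonneg fun i _ => Finset.sum_nonneg fun j _ => sq_nonneg _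
  have hun : (0:ℝ) ≤ ∑ j, (u j) ^ 2 := Finset.sum_nonneg fun j _ => sq_nonneg _
  set S := ∑ i, s i with hSdef
  set A := ∑ i, ∑ j, ((D - M) i j) ^ 2 with hAdef
  set U := ∑ j, (u j) ^ 2 with hUdef
  set Y := ∑ i, (y i) ^ 2 with hYdef
  have hA' : ∑ i, ∑ j, ((D - M') i j) ^ 2 = A - (Y * U + (2/l3) * U) := by
    have h2 := first
    field_simp at h2 ⊢
    nlinarith [h2]
  have ht1 : ((t:ℝ) + 1) ≠ 0 := by positivity
  have ht0 : (t:ℝ) ≠ 0 := ne_of_gt htp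
  have expand : (1 / ((t : ℝ) + 1)) * (S + (1 / 2) * U)
        + (l3 / (2 * ((t : ℝ) + 1))) * (A - (Y * U + (2/l3) * U))
        - (1 / (t : ℝ)) * S - (l3 / (2 * (t : ℝ))) * A
      = (1/((t:ℝ)+1) - 1/(t:ℝ)) * (S + (l3/2) * A)
        - (1/((t:ℝ)+1)) * ((l3/2) * (Y * U) + (1/2) * U) := by
    field_simp
    ring
  have hle : (1/((t:ℝ)+1) - 1/(t:ℝ)) * (S + (l3/2) * A) ≤ 0 := by
    apply mul_nonpos_of_nonpos_of_nonneg
    · have : (1:ℝ)/((t:ℝ)+1) ≤ 1/(t:ℝ) := by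
        apply one_div_le_one_div_of_le htp; linarith
      linarith
    · positivity
  have hle2 : (0:ℝ) ≤ (1/((t:ℝ)+1)) * ((l3/2) * (Y * U) + (1/2) * U) := by positivity
  rw [hA']
  exact ⟨by rw [expand]; linarith, by rw [expand]; linarith⟩
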